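/- Proposition 1 (only-if direction): suppose each agent i ∈ {0,...,n} has an expected multi-utility preference with a strictly increasing nonempty compact convex set U_i of nonconstant functions, and (U_1,...,U_n) has a no-conflict pair respected by all sets. If Non-Reversal holds (for all lotteries l, l': l ≻_i l' for all i ∈ {1,...,n} implies l' ⋡_0 l), then there exist u_0 ∈ U_0, (u_1,...,u_n) ∈ Π_{i=1}^n U_i, a nonzero α ∈ ℝ^n_{≥0}, and β ∈ ℝ with u_0 = Σ_i α_i u_i + β·1. -/

import Mathlib

open Finset

/-- Expected utility of lottery `l` with utility `u`. -/
def EU {Z : Type*} [Fintype Z] (l u : Z → ℝ) : ℝ := ∑ z, l z * u z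

/-- `l` is a lottery (probability distribution) on `Z`. -/
def IsLottery {Z : Type*} [Fintype Z] (l : Z → ℝ) : Prop :=
  (∀ z, 0 ≤ l z) ∧ ∑ z, l z = 1

/-- Expected multi-utility preference: `l ≿ l'` under the set `U`. -/
def Pref {Z : Type*} [Fintype Z] (U : Set (Z → ℝ)) (l l' : Z → ℝ) : Prop :=
  ∀ u ∈ U, EU l' u ≤ EU l u

/-- `u` is nonconstant. -/
def Nonconst {Z : Type*} (u : Z → ℝ) : Prop := ∃ z z', u z ≠ u z'


lemma cone_isClosed {Z : Type*} [Fintype Z] {n : ℕ} (hn : 0 < n)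
    (U : Fin n → Set (Z → ℝ))
    (hUcpt : ∀ i, IsCompact (U i)) (zs zi : Z)
    (hpos : ∀ i, ∀ u ∈ U i, u zi < u zs) :
    IsClosed {v : Z → ℝ | ∃ (α : Fin n → ℝ) (w : Fin n → Z → ℝ) (β : ℝ),
      (∀ i, 0 ≤ α i) ∧ (∀ i, w i ∈ U i) ∧ v = fun z => (∑ i, α i * w i z) + β} := by
  have : Nonempty (Fin n) := ⟨⟨0, hn⟩⟩
  apply IsSeqClosed.isClosed
  intro v p hv hvp
  -- choice of witnesses
  choose α w β hα hw hveq using hv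
  -- the gap functional
  set g : (Z → ℝ) → ℝ := fun u => u zs - u zi with hg
  have hgc : Continuous g := (continuous_apply zs).sub (continuous_apply zi)
  -- min of g on each U i
  have hmin : ∀ i, ∃ m : ℝ, 0 < m ∧ ∀ u ∈ U i, m ≤ g u := by
    intro i
    rcases Set.eq_empty_or_nonempty (U i) with he | hne
    · exact ⟨1, one_pos, by simp [he]⟩
    · obtain ⟨u₀, hu₀, hmin⟩ := (hUcpt i).exists_isMinOn hne hgc.continuousOn
      exact ⟨g u₀, sub_pos.2 (hpos i u₀ hu₀), fun u hu => hmin hu⟩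
  choose μ hμpos hμle using hmin
  obtain ⟨i₀, -, hi₀⟩ := Finset.exists_min_image Finset.univ μ ⟨Classical.arbitrary _, Finset.mem_univ _⟩
  set m : ℝ := μ i₀ with hm
  have hmpos : 0 < m := hμpos i₀
  have hmle : ∀ i, ∀ u ∈ U i, m ≤ g u := fun i u hu =>
    le_trans (hi₀ i (Finset.mem_univ i)) (hμle i u hu)
  -- g (v j) = ∑ α j i * g (w j i)
  have hgv : ∀ j, g (v j) = ∑ i, α j i * g (w j i) := by
    intro j
    have := hveq j
    simp only [hg, this, ← Finset.sum_sub_distrib]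
    ring_nf
    rw [← Finset.sum_sub_distrib]
  -- bound on α
  have hbdd : BddAbove (Set.range fun j => g (v j)) :=
    Filter.Tendsto.bddAbove_range ((hgc.tendsto _).comp hvp)
  obtain ⟨G, hG⟩ := hbdd
  have hαbd : ∀ j i, α j i ≤ G / m := by
    intro j i
    have h1 : α j i * m ≤ ∑ i', α j i' * g (w j i') := by
      have h2 : ∀ i', α j i' * m ≤ α j i' * g (w j i') := fun i' =>
        mul_le_mul_of_nonneg_left (hmle i' _ (hw j i')) (hα j i')
      calc α j i * m ≤ ∑ i', α j i' * m :=
            Finset.single_le_sum (fun i' _ => mul_nonneg (hα j i') hmpos.le) (Finset.mem_univ i)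
        _ ≤ _ := Finset.sum_le_sum fun i' _ => h2 i'
    have h3 : α j i * m ≤ G := le_trans h1 (by rw [← hgv j]; exact hG ⟨j, rfl⟩)
    rw [le_div_iff₀ hmpos]
    exact h3
  -- compact product set
  set A : ℝ := G / m with hA
  set T : Set ((Fin n → ℝ) × (Fin n → Z → ℝ)) :=
    (Set.univ.pi fun _ => Set.Icc (0:ℝ) A) ×ˢ (Set.univ.pi U) with hT
  have hTcpt : IsCompact T :=
    (isCompact_univ_pi fun _ => isCompact_Icc).prod (isCompact_univ_pi hUcpt)
  have hmem : ∀ j, (α j, w j) ∈ T := by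
    intro j
    refine ⟨fun i _ => ⟨hα j i, hαbd j i⟩, fun i _ => hw j i⟩
  obtain ⟨⟨a, x⟩, hax, φ, hφ, hconv⟩ := hTcpt.tendsto_subseq hmem
  have hxmem : ∀ i, x i ∈ U i := fun i => hax.2 i (Set.mem_univ i)
  have hanon : ∀ i, 0 ≤ a i := fun i => (hax.1 i (Set.mem_univ i)).1
  -- componentwise convergence
  have haconv : ∀ i, Filter.Tendsto (fun j => α (φ j) i) Filter.atTop (nhds (a i)) := by
    intro i
    exact ((continuous_apply i).comp continuous_fst).continuousAt.tendsto.comp hconv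
  have hwconv : ∀ i z, Filter.Tendsto (fun j => w (φ j) i z) Filter.atTop (nhds (x i z)) := by
    intro i z
    exact ((continuous_apply z).comp ((continuous_apply i).comp continuous_snd)).continuousAt.tendsto.comp hconv
  have hvsub : ∀ z : Z, Filter.Tendsto (fun j => v (φ j) z) Filter.atTop (nhds (p z)) :=
    fun z => ((continuous_apply z).continuousAt.tendsto.comp hvp).comp
      (hφ.tendsto_atTop)
  -- β converges
  set b : ℝ := p zi - ∑ i, a i * x i zi with hb
  have hβeq : ∀ j, β j = v j zi - ∑ i, α j i * w j i zi := by
    intro j; rw [hveq j]; ring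
  have hβconv : Filter.Tendsto (fun j => β (φ j)) Filter.atTop (nhds b) := by
    simp only [hβeq]
    exact (hvsub zi).sub (tendsto_finset_sum _ fun i _ => (haconv i).mul (hwconv i zi))
  refine ⟨a, x, b, hanon, hxmem, ?_⟩
  funext z
  have h1 : Filter.Tendsto (fun j => v (φ j) z) Filter.atTop
      (nhds ((∑ i, a i * x i z) + b)) := by
    have : ∀ j, v (φ j) z = (∑ i, α (φ j) i * w (φ j) i z) + β (φ j) := by
      intro j; rw [hveq (φ j)]
    simp only [this]
    exact (tendsto_finset_sum _ fun i _ => (haconv i).mul (hwconv i z)).add hβconv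
  exact tendsto_nhds_unique (hvsub z) h1

lemma cone_convex {Z : Type*} [Fintype Z] {n : ℕ}
    (U : Fin n → Set (Z → ℝ)) (hUcvx : ∀ i, Convex ℝ (U i)) :
    Convex ℝ {v : Z → ℝ | ∃ (α : Fin n → ℝ) (w : Fin n → Z → ℝ) (β : ℝ),
      (∀ i, 0 ≤ α i) ∧ (∀ i, w i ∈ U i) ∧ v = fun z => (∑ i, α i * w i z) + β} := by
  rintro v ⟨α, w, β, hα, hw, rfl⟩ v' ⟨α', w', β', hα', hw', rfl⟩ s t hs ht hst
  classical
  set α'' : Fin n → ℝ := fun i => s * α i + t * α' i with hα''def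
  have hα''nn : ∀ i, 0 ≤ α'' i := fun i =>
    add_nonneg (mul_nonneg hs (hα i)) (mul_nonneg ht (hα' i))
  set w'' : Fin n → Z → ℝ := fun i =>
    if h : α'' i = 0 then w i
    else (s * α i / α'' i) • w i + (t * α' i / α'' i) • w' i with hw''def
  have hw''mem : ∀ i, w'' i ∈ U i := by
    intro i
    simp only [hw''def]
    split_ifs with h
    · exact hw i
    · have hpos : 0 < α'' i := lt_of_le_of_ne (hα''nn i) (Ne.symm h)
      refine hUcvx i (hw i) (hw' i) (div_nonneg (mul_nonneg hs (hα i)) hpos.le)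
        (div_nonneg (mul_nonneg ht (hα' i)) hpos.le) ?_
      field_simp
      rfl
  refine ⟨α'', w'', s * β + t * β', hα''nn, hw''mem, ?_⟩
  funext z
  simp only [Pi.add_apply, Pi.smul_apply, smul_eq_mul]
  have key : ∀ i, s * (α i * w i z) + t * (α' i * w' i z) = α'' i * w'' i z := by
    intro i
    simp only [hw''def]
    split_ifs with h
    · have h' : s * α i + t * α' i = 0 := h
      have h1 : s * α i = 0 ∧ t * α' i = 0 := by
        constructor <;> nlinarith [mul_nonneg hs (hα i), mul_nonneg ht (hα' i)]
      rw [h, zero_mul, show s * (α i * w i z) = s * α i * w i z from by ring,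
        show t * (α' i * w' i z) = t * α' i * w' i z from by ring, h1.1, h1.2]
      ring
    · have hpos : α'' i ≠ 0 := h
      simp only [Pi.add_apply, Pi.smul_apply, smul_eq_mul]
      field_simp
  calc s * ((∑ i, α i * w i z) + β) + t * ((∑ i, α' i * w' i z) + β')
      = (∑ i, (s * (α i * w i z) + t * (α' i * w' i z))) + (s * β + t * β') := by
        rw [Finset.sum_add_distrib, ← Finset.mul_sum, ← Finset.mul_sum]; ring
    _ = (∑ i, α'' i * w'' i z) + (s * β + t * β') := by
        congr 1; exact Finset.sum_congr rfl fun i _ => key i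

theorem non_reversal_only_if
    {Z : Type*} [Fintype Z] [Nonempty Z] {n : ℕ} (hn : 0 < n)
    (U : Fin n → Set (Z → ℝ)) (U₀ : Set (Z → ℝ))
    (hUne : ∀ i, (U i).Nonempty) (hU₀ne : U₀.Nonempty)
    (hUcpt : ∀ i, IsCompact (U i)) (hU₀cpt : IsCompact U₀)
    (hUcvx : ∀ i, Convex ℝ (U i)) (hU₀cvx : Convex ℝ U₀)
    (hUnc : ∀ i, ∀ u ∈ U i, Nonconst u) (hU₀nc : ∀ u ∈ U₀, Nonconst u)
    (hUinc : ∀ i, ∀ u ∈ U i, ∀ l l' : Z → ℝ, IsLottery l → IsLottery l' →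
      Pref (U i) l l' → ¬ Pref (U i) l' l → EU l' u < EU l u)
    (hU₀inc : ∀ u ∈ U₀, ∀ l l' : Z → ℝ, IsLottery l → IsLottery l' →
      Pref U₀ l l' → ¬ Pref U₀ l' l → EU l' u < EU l u)
    (hnc : ∃ zs zi : Z, (∀ i, ∀ u ∈ U i, u zi < u zs) ∧ (∀ u ∈ U₀, u zi < u zs))
    (hnr : ∀ l l' : Z → ℝ, IsLottery l → IsLottery l' →
      (∀ i, Pref (U i) l l' ∧ ¬ Pref (U i) l' l) → ¬ Pref U₀ l' l) :
    ∃ u₀ ∈ U₀, ∃ u : Fin n → (Z → ℝ), (∀ i, u i ∈ U i) ∧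
      ∃ α : Fin n → ℝ, ∃ β : ℝ, (∀ i, 0 ≤ α i) ∧ α ≠ 0 ∧
        u₀ = fun z => (∑ i, α i * u i z) + β := by
  classical
  obtain ⟨zs, zi, hncU, hncU₀⟩ := hnc
  have hCc := cone_isClosed hn U hUcpt zs zi hncU
  have hCcvx := cone_convex U hUcvx
  set C : Set (Z → ℝ) := {v : Z → ℝ | ∃ (α : Fin n → ℝ) (w : Fin n → Z → ℝ) (β : ℝ),
      (∀ i, 0 ≤ α i) ∧ (∀ i, w i ∈ U i) ∧ v = fun z => (∑ i, α i * w i z) + β} with hCdef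
  by_cases hd : Disjoint U₀ C
  · exfalso
    obtain ⟨f, p, q, hfp, hpq, hqf⟩ :=
      geometric_hahn_banach_compact_closed hU₀cvx hU₀cpt hCcvx hCc hd
    -- constants are in C
    have hconstC : ∀ t : ℝ, (fun _ : Z => t) ∈ C := by
      intro t
      exact ⟨0, fun i => (hUne i).choose, t, fun i => le_refl 0,
        fun i => (hUne i).choose_spec, by funext z; simp⟩
    have h0C : (0 : Z → ℝ) ∈ C := by
      have := hconstC 0
      convert this using 1
      rfl
    have hq0 : q < 0 := by
      have := hqf 0 h0C
      simpa using this
    have hp0 : p < 0 := lt_trans hpq hq0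
    -- f of constants is zero
    have hf1 : f (fun _ : Z => (1:ℝ)) = 0 := by
      by_contra hne
      set c1 := f (fun _ : Z => (1:ℝ)) with hc1
      have hscale : ∀ t : ℝ, q < t * c1 := by
        intro t
        have h1 : (fun _ : Z => t) = t • (fun _ : Z => (1:ℝ)) := by
          funext z; simp
        have := hqf _ (hconstC t)
        rwa [h1, map_smul, smul_eq_mul] at this
      have := hscale ((q - 1) / c1)
      rw [div_mul_cancel₀ _ hne] at this
      linarith
    -- f nonneg on each U i
    have hfU : ∀ i, ∀ u ∈ U i, 0 ≤ f u := by
      intro i u hu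
      by_contra hneg
      push_neg at hneg
      have hscale : ∀ t : ℝ, 0 ≤ t → q < t * f u := by
        intro t ht
        have htu : t • u ∈ C := by
          refine ⟨fun j => if j = i then t else 0,
            fun j => if j = i then u else (hUne j).choose, 0, ?_, ?_, ?_⟩
          · intro j
            show (0:ℝ) ≤ if j = i then t else 0
            split_ifs; exacts [ht, le_refl 0]
          · intro j
            show (if j = i then u else (hUne j).choose) ∈ U j
            split_ifs with h
            · subst h; exact hu
            · exact (hUne j).choose_spec
          · funext z
            have hterm : ∀ j : Fin n,
                (if j = i then t else 0) * (if j = i then u else (hUne j).choose) z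
                = if j = i then t * u z else 0 := fun j => by split_ifs <;> simp
            simp only [Pi.smul_apply, smul_eq_mul, hterm, Finset.sum_ite_eq',
              Finset.mem_univ, if_true, add_zero]
        have := hqf _ htu
        rwa [map_smul, smul_eq_mul] at this
      have ht : (0:ℝ) ≤ (q - 1) / f u :=
        div_nonneg_iff.2 (Or.inr ⟨by linarith, hneg.le⟩)
      have := hscale _ ht
      rw [div_mul_cancel₀ _ (ne_of_lt hneg)] at this
      linarith
    -- max of gap on U₀
    obtain ⟨umax, humax, hmax⟩ := hU₀cpt.exists_isMaxOn hU₀ne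
      ((continuous_apply zs).sub (continuous_apply zi)).continuousOn
    set M : ℝ := umax zs - umax zi with hM
    have hMpos : 0 < M := sub_pos.2 (hncU₀ umax humax)
    set ε : ℝ := -p / (2 * M) with hε
    have hεpos : 0 < ε := div_pos (by linarith) (by linarith)
    set F : (Z → ℝ) → ℝ := fun u => f u + ε * (u zs - u zi) with hF
    have hFU : ∀ i, ∀ u ∈ U i, 0 < F u := fun i u hu =>
      add_pos_of_nonneg_of_pos (hfU i u hu)
        (mul_pos hεpos (sub_pos.2 (hncU i u hu)))
    have hFU₀ : ∀ u ∈ U₀, F u < 0 := by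
      intro u hu
      have h1 : f u < p := hfp u hu
      have h2 : u zs - u zi ≤ M := hmax hu
      have h3 : ε * (u zs - u zi) ≤ ε * M := by
        rcases le_or_gt (u zs - u zi) 0 with h | h
        · nlinarith
        · exact mul_le_mul_of_nonneg_left h2 hεpos.le
      have h4 : ε * M = -p / 2 := by
        rw [hε]; field_simp
      simp only [hF]; rw [h4] at h3; linarith
    -- coefficients
    set c : Z → ℝ := fun z => f (fun j => if z = j then 1 else 0)
      + ε * ((if z = zs then 1 else 0) - (if z = zi then 1 else 0)) with hc
    have key : ∀ u : Z → ℝ, ∑ z, c z * u z = F u := by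
      intro u
      have h1 : f u = ∑ z, u z * f (fun j => if z = j then 1 else 0) := by
        conv_lhs => rw [pi_eq_sum_univ u]
        rw [map_sum]
        exact Finset.sum_congr rfl fun z _ => by rw [map_smul, smul_eq_mul]
      simp only [hF, hc]
      rw [h1]
      have expand : ∀ z, (f (fun j => if z = j then 1 else 0)
          + ε * ((if z = zs then 1 else 0) - (if z = zi then 1 else 0))) * u z
          = u z * f (fun j => if z = j then 1 else 0)
            + ε * ((if z = zs then u z else 0) - (if z = zi then u z else 0)) := by
        intro z
        split_ifs <;> ring
      rw [Finset.sum_congr rfl fun z _ => expand z, Finset.sum_add_distrib,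
        ← Finset.mul_sum, Finset.sum_sub_distrib,
        Finset.sum_ite_eq' Finset.univ zs u, Finset.sum_ite_eq' Finset.univ zi u]
      simp
    have hsumc : ∑ z, c z = 0 := by
      have := key (fun _ => 1)
      simp only [hF, mul_one, hf1, sub_self, mul_zero, add_zero] at this
      exact this
    -- the lotteries
    set m : ℝ := ∑ z, max (c z) 0 with hm
    obtain ⟨u₀, hu₀⟩ := hU₀ne
    have hFu₀ : F u₀ < 0 := hFU₀ u₀ hu₀
    have hmpos : 0 < m := by
      rcases lt_or_ge 0 m with h | h
      · exact h
      · exfalso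
        have hm0 : m = 0 := le_antisymm h
          (Finset.sum_nonneg fun z _ => le_max_right _ _)
        have hcz : ∀ z, c z ≤ 0 := by
          intro z
          have := (Finset.sum_eq_zero_iff_of_nonneg
            (fun z _ => le_max_right (c z) 0)).1 hm0 z (Finset.mem_univ z)
          have h2 : c z ≤ max (c z) 0 := le_max_left _ _
          rw [this] at h2; exact h2
        have hceq : ∀ z, c z = 0 := by
          intro z
          have := (Finset.sum_eq_zero_iff_of_nonpos
            (fun z _ => hcz z)).1 hsumc z (Finset.mem_univ z)
          exact this
        have : F u₀ = 0 := by
          rw [← key u₀]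
          exact Finset.sum_eq_zero fun z _ => by rw [hceq z, zero_mul]
        linarith
    have hmaxneg : ∀ x : ℝ, max (-x) 0 = max x 0 - x := by
      intro x
      rcases le_total 0 x with h | h
      · rw [max_eq_right (neg_nonpos.2 h), max_eq_left h]; ring
      · rw [max_eq_left (neg_nonneg.2 h), max_eq_right h]; ring
    set l : Z → ℝ := fun z => max (c z) 0 / m with hl
    set l' : Z → ℝ := fun z => max (-(c z)) 0 / m with hl'
    have hlL : IsLottery l := by
      constructor
      · intro z; exact div_nonneg (le_max_right _ _) hmpos.le
      · rw [hl, ← Finset.sum_div, ← hm, div_self (ne_of_gt hmpos)]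
    have hl'L : IsLottery l' := by
      constructor
      · intro z; exact div_nonneg (le_max_right _ _) hmpos.le
      · rw [hl', ← Finset.sum_div]
        rw [Finset.sum_congr rfl fun z _ => hmaxneg (c z)]
        rw [Finset.sum_sub_distrib, hsumc, sub_zero, ← hm, div_self (ne_of_gt hmpos)]
    have hdiff : ∀ u : Z → ℝ, EU l u - EU l' u = F u / m := by
      intro u
      rw [EU, EU, ← Finset.sum_sub_distrib]
      rw [Finset.sum_congr rfl fun z _ => show l z * u z - l' z * u z = (c z * u z) / m by
        simp only [hl, hl', hmaxneg]; ring]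
      rw [← Finset.sum_div, key u]
    -- apply non-reversal
    have hstrict : ∀ i, Pref (U i) l l' ∧ ¬ Pref (U i) l' l := by
      intro i
      constructor
      · intro u hu
        have := hdiff u
        have h2 : 0 < F u / m := div_pos (hFU i u hu) hmpos
        linarith
      · intro hP
        have hu := (hUne i).choose_spec
        have := hP _ hu
        have h2 : 0 < F _ / m := div_pos (hFU i _ hu) hmpos
        have h3 := hdiff (hUne i).choose
        linarith
    have hPref₀ : Pref U₀ l' l := by
      intro u hu
      have := hdiff u
      have h2 : F u / m < 0 := div_neg_of_neg_of_pos (hFU₀ u hu) hmpos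
      linarith
    exact hnr l l' hlL hl'L hstrict hPref₀
  · rw [Set.not_disjoint_iff] at hd
    obtain ⟨u₀, hu₀, α, w, β, hα, hw, heq⟩ := hd
    refine ⟨u₀, hu₀, w, hw, α, β, hα, ?_, heq⟩
    intro hα0
    obtain ⟨z, z', hne⟩ := hU₀nc u₀ hu₀
    apply hne
    have : ∀ z, u₀ z = β := by
      intro z
      rw [heq]
      simp [hα0]
    rw [this z, this z']
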